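/- (Density Theorem for Random Decompositions) Let S be a subset of the Fibonacci numbers with asymptotic density q(S). Then with probability 1, the limit of #(A_n(p) ∩ S)/#A_n(p) as n → ∞ equals q(S). -/

import Mathlib

open Finset

noncomputable section

def Fib (n : ℕ) : ℕ := Nat.fib (n + 1)

/-- `included c k` : whether `F_{k+1}` is included in the random Zeckendorf process,
given coins `c` (`c k` is the coin for step `k+1`): a Fibonacci number is included
with probability `p` when the previous one was not included, and is excluded otherwise. -/
def included (c : ℕ → Bool) : ℕ → Bool
  | 0 => c 0
  | k + 1 => !included c k && c (k + 1)

/-- Extend a finite coin sequence by `false`. -/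
def ext (n : ℕ) (c : Fin n → Bool) : ℕ → Bool :=
  fun j => if h : j < n then c ⟨j, h⟩ else false

/-- Probability weight of a finite coin sequence, each coin heads with probability `p`. -/
def wt (p : ℝ) {n : ℕ} (c : Fin n → Bool) : ℝ :=
  ∏ i, if c i then p else 1 - p

open Classical in
/-- Probability of an event depending on the first `n` coins. -/
def finProb (p : ℝ) (n : ℕ) (E : (ℕ → Bool) → Prop) : ℝ :=
  ∑ c : Fin n → Bool, if E (ext n c) then wt p c else 0

/-- `Prob (F_k ∈ A(p))` for `k ≥ 1`. -/
def probIncl (p : ℝ) (k : ℕ) : ℝ :=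
  finProb p k (fun c => included c (k - 1) = true)

/-- Expected value of a function of the first `n` coins. -/
def expVal (p : ℝ) (n : ℕ) (f : (ℕ → Bool) → ℝ) : ℝ :=
  ∑ c : Fin n → Bool, wt p c * f (ext n c)

/-- `W_n` : the number of selected indices among `1,...,n`. -/
def countIn (n : ℕ) (c : ℕ → Bool) : ℕ :=
  ((Icc 1 n).filter (fun j => included c (j - 1) = true)).card

namespace RZ

def w (p : ℝ) (b : Bool) : ℝ := if b then p else 1 - p

variable {p : ℝ}

lemma w_nonneg (hp0 : 0 ≤ p) (hp1 : p ≤ 1) (b : Bool) : 0 ≤ w p b := by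
  cases b <;> simp [w] <;> linarith

lemma wt_nonneg (hp0 : 0 ≤ p) (hp1 : p ≤ 1) {n : ℕ} (c : Fin n → Bool) : 0 ≤ wt p c :=
  Finset.prod_nonneg fun i _ => by have := w_nonneg hp0 hp1 (c i); simpa [w] using this

lemma included_congr {c c' : ℕ → Bool} : ∀ k, (∀ i, i ≤ k → c i = c' i) → included c k = included c' k
  | 0, h => by simpa [included] using h 0 le_rfl
  | k + 1, h => by
    rw [included, included, included_congr k (fun i hi => h i (hi.trans k.le_succ)),
      h (k+1) le_rfl]

lemma sum_snoc {M : Type*} [AddCommMonoid M] (n : ℕ) (g : (Fin (n+1) → Bool) → M) :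
    (∑ c : Fin (n+1) → Bool, g c)
      = ∑ c : Fin n → Bool, (g (Fin.snoc c false) + g (Fin.snoc c true)) := by
  rw [← Equiv.sum_comp (Fin.snocEquiv (fun _ => Bool)) g, Fintype.sum_prod_type_right]
  rw [Fintype.univ_bool]
  simp [Fin.snocEquiv, add_comm]

lemma wt_snoc (n : ℕ) (c : Fin n → Bool) (b : Bool) :
    wt p (Fin.snoc c b) = wt p c * w p b := by
  rw [wt, Fin.prod_univ_castSucc]
  simp [wt, w]

lemma included_ext_snoc {n k : ℕ} (hk : k < n) (c : Fin n → Bool) (b : Bool) :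
    included (ext (n+1) (Fin.snoc c b)) k = included (ext n c) k := by
  apply included_congr
  intro i hi
  have hi' : i < n := lt_of_le_of_lt hi hk
  have h1 : i < n + 1 := hi'.trans (Nat.lt_succ_self n)
  simp only [_root_.ext, dif_pos hi', dif_pos h1]
  have : (⟨i, h1⟩ : Fin (n+1)) = Fin.castSucc ⟨i, hi'⟩ := rfl
  rw [this, Fin.snoc_castSucc]

/-- indicator of inclusion as a real. -/
def X (k : ℕ) (c : ℕ → Bool) : ℝ := if included c k then 1 else 0

lemma X_mul_self (k : ℕ) (c : ℕ → Bool) : X k c * X k c = X k c := by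
  by_cases h : included c k <;> simp [X, h]

lemma X_nonneg (k c) : 0 ≤ X k c := by by_cases h : included c k <;> simp [X, h]
lemma X_le_one (k c) : X k c ≤ 1 := by by_cases h : included c k <;> simp [X, h]

lemma w_false : w p false = 1 - p := rfl
lemma w_true : w p true = p := rfl

lemma expVal_succ (n : ℕ) (f : (ℕ → Bool) → ℝ) :
    expVal p (n+1) f = ∑ c : Fin n → Bool, wt p c *
      ((1-p) * f (ext (n+1) (Fin.snoc c false)) + p * f (ext (n+1) (Fin.snoc c true))) := by
  rw [expVal, sum_snoc]
  refine Finset.sum_congr rfl fun c _ => ?_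
  rw [wt_snoc, wt_snoc, w_false, w_true]
  ring

lemma sum_wt : ∀ n : ℕ, (∑ c : Fin n → Bool, wt p c) = 1
  | 0 => by simp [wt]
  | n + 1 => by
    rw [sum_snoc]
    have : ∀ c : Fin n → Bool, wt p (Fin.snoc c false) + wt p (Fin.snoc c true)
        = wt p c := by
      intro c; rw [wt_snoc, wt_snoc, w_false, w_true]; ring
    rw [Finset.sum_congr rfl (fun c _ => this c), sum_wt n]

/-- `f` depends only on coordinates `< m`. -/
def depOn (m : ℕ) (f : (ℕ → Bool) → ℝ) : Prop :=
  ∀ c c' : ℕ → Bool, (∀ i, i < m → c i = c' i) → f c = f c'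

lemma depOn_X (k : ℕ) : depOn (k+1) (X k) := by
  intro c c' h
  rw [X, X, included_congr k (fun i hi => h i (Nat.lt_succ_of_le hi))]

lemma depOn_mono {m m' : ℕ} (h : m ≤ m') {f} (hf : depOn m f) : depOn m' f :=
  fun c c' hcc => hf c c' fun i hi => hcc i (lt_of_lt_of_le hi h)

lemma depOn_mul {m f g} (hf : depOn m f) (hg : depOn m g) :
    depOn m (fun c => f c * g c) := fun c c' h => by simp only []; rw [hf c c' h, hg c c' h]

lemma ext_snoc_agree {n : ℕ} (c : Fin n → Bool) (b : Bool) {i : ℕ} (h : i < n) :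
    ext (n+1) (Fin.snoc c b) i = ext n c i := by
  have h1 : i < n + 1 := h.trans (Nat.lt_succ_self n)
  simp only [_root_.ext, dif_pos h, dif_pos h1]
  have : (⟨i, h1⟩ : Fin (n+1)) = Fin.castSucc ⟨i, h⟩ := rfl
  rw [this, Fin.snoc_castSucc]

lemma expVal_stable_succ {n : ℕ} {f} (hf : depOn n f) :
    expVal p (n+1) f = expVal p n f := by
  rw [expVal_succ, expVal]
  refine Finset.sum_congr rfl fun c _ => ?_
  rw [hf (ext (n+1) (Fin.snoc c false)) (ext n c) (fun i hi => ext_snoc_agree c false hi),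
    hf (ext (n+1) (Fin.snoc c true)) (ext n c) (fun i hi => ext_snoc_agree c true hi)]
  ring

lemma expVal_stable {m n : ℕ} (hmn : m ≤ n) {f} (hf : depOn m f) :
    expVal p n f = expVal p m f := by
  induction n, hmn using Nat.le_induction with
  | base => rfl
  | succ n hmn ih => rw [expVal_stable_succ (depOn_mono hmn hf), ih]

lemma ext_snoc_last {n : ℕ} (c : Fin n → Bool) (b : Bool) :
    ext (n+1) (Fin.snoc c b) n = b := by
  have h : n < n + 1 := Nat.lt_succ_self n
  simp only [_root_.ext, dif_pos h]
  have : (⟨n, h⟩ : Fin (n+1)) = Fin.last n := rfl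
  rw [this, Fin.snoc_last]

lemma X_ext_snoc {n j : ℕ} (hj : j < n) (c : Fin n → Bool) (b : Bool) :
    X j (ext (n+1) (Fin.snoc c b)) = X j (ext n c) :=
  depOn_X j (ext (n+1) (Fin.snoc c b)) (ext n c)
    (fun i hi => ext_snoc_agree c b (lt_of_lt_of_le hi hj))

lemma X_zero_ext_snoc (c : Fin 0 → Bool) (b : Bool) :
    X 0 (ext 1 (Fin.snoc c b)) = if b then 1 else 0 := by
  rw [X, included]
  rw [ext_snoc_last]

lemma X_succ_ext_snoc {k : ℕ} (c : Fin (k+1) → Bool) (b : Bool) :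
    X (k+1) (ext (k+2) (Fin.snoc c b))
      = (if b then (1:ℝ) else 0) * (1 - X k (ext (k+1) c)) := by
  rw [X, included, ext_snoc_last, included_congr k
    (fun i hi => ext_snoc_agree c b (Nat.lt_succ_of_le hi))]
  cases b <;> by_cases h : included (ext (k+1) c) k <;> simp [X, h]

/-- `ev p k = E X_k`. -/
def ev (p : ℝ) : ℕ → ℝ
  | 0 => p
  | k + 1 => p * (1 - ev p k)

lemma ev_mem (hp0 : 0 ≤ p) (hp1 : p ≤ 1) : ∀ k, 0 ≤ ev p k ∧ ev p k ≤ 1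
  | 0 => ⟨hp0, hp1⟩
  | k + 1 => by
    obtain ⟨h0, h1⟩ := ev_mem hp0 hp1 k
    constructor
    · exact mul_nonneg hp0 (by linarith)
    · calc p * (1 - ev p k) ≤ 1 * 1 := by
            apply mul_le_mul hp1 (by linarith) (by linarith) zero_le_one
        _ = 1 := by ring
    
lemma expVal_X : ∀ k, expVal p (k+1) (X k) = ev p k
  | 0 => by
    rw [expVal_succ, Fintype.sum_unique, X_zero_ext_snoc, X_zero_ext_snoc]
    simp [wt, ev]
  | k + 1 => by
    rw [expVal_succ]
    have : ∀ c : Fin (k+1) → Bool, wt p c *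
        ((1-p) * X (k+1) (ext (k+2) (Fin.snoc c false))
          + p * X (k+1) (ext (k+2) (Fin.snoc c true)))
        = p * wt p c - p * (wt p c * X k (ext (k+1) c)) := by
      intro c
      rw [X_succ_ext_snoc, X_succ_ext_snoc]
      simp only [Bool.false_eq_true, if_false, if_true]
      ring
    rw [Finset.sum_congr rfl (fun c _ => this c), Finset.sum_sub_distrib,
      ← Finset.mul_sum, ← Finset.mul_sum, sum_wt]
    have : (∑ c : Fin (k+1) → Bool, wt p c * X k (ext (k+1) c)) = ev p k :=
      expVal_X k
    rw [this, ev]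
    ring

lemma expVal_XX_succ (j k : ℕ) (hjk : j ≤ k) :
    expVal p (k+2) (fun c => X j c * X (k+1) c)
      = p * (expVal p (k+1) (X j) - expVal p (k+1) (fun c => X j c * X k c)) := by
  rw [expVal_succ]
  have : ∀ c : Fin (k+1) → Bool, wt p c *
      ((1-p) * (X j (ext (k+2) (Fin.snoc c false)) * X (k+1) (ext (k+2) (Fin.snoc c false)))
        + p * (X j (ext (k+2) (Fin.snoc c true)) * X (k+1) (ext (k+2) (Fin.snoc c true))))
      = p * (wt p c * X j (ext (k+1) c)) - p * (wt p c * (X j (ext (k+1) c) * X k (ext (k+1) c))) := by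
    intro c
    rw [X_succ_ext_snoc, X_succ_ext_snoc, X_ext_snoc (Nat.lt_succ_of_le hjk),
      X_ext_snoc (Nat.lt_succ_of_le hjk)]
    simp only [Bool.false_eq_true, if_false, if_true]
    ring
  rw [Finset.sum_congr rfl (fun c _ => this c), Finset.sum_sub_distrib,
    ← Finset.mul_sum, ← Finset.mul_sum, expVal, expVal]
  ring

lemma expVal_XX_diag (n j : ℕ) :
    expVal p n (fun c => X j c * X j c) = expVal p n (X j) := by
  rw [expVal, expVal]
  exact Finset.sum_congr rfl fun c _ => by rw [X_mul_self]

/-- covariance bound -/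
lemma cov_bound (hp0 : 0 < p) (hp1 : p < 1) (j : ℕ) :
    ∀ k, j ≤ k →
      |expVal p (k+1) (fun c => X j c * X k c) - ev p j * ev p k| ≤ p ^ (k - j) := by
  intro k hk
  induction k, hk using Nat.le_induction with
  | base =>
    rw [expVal_XX_diag, expVal_X, Nat.sub_self, pow_zero]
    obtain ⟨h0, h1⟩ := ev_mem hp0.le hp1.le j
    rw [abs_le]
    constructor <;> nlinarith
  | succ k hjk ih =>
    have hstab : expVal p (k+1) (X j) = ev p j := by
      rw [expVal_stable (Nat.succ_le_succ hjk) (depOn_X j), expVal_X]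
    rw [expVal_XX_succ j k hjk, hstab]
    have hD : p * (ev p j - expVal p (k+1) (fun c => X j c * X k c))
        - ev p j * ev p (k+1)
        = -p * (expVal p (k+1) (fun c => X j c * X k c) - ev p j * ev p k) := by
      rw [ev]
      ring
    rw [hD, abs_mul, abs_neg, abs_of_pos hp0]
    have : k + 1 - j = (k - j) + 1 := by omega
    rw [this, pow_succ]
    calc p * |expVal p (k+1) (fun c => X j c * X k c) - ev p j * ev p k|
        ≤ p * p ^ (k-j) := by
          exact mul_le_mul_of_nonneg_left ih hp0.le
      _ = p ^ (k-j) * p := mul_comm _ _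

lemma geom_le (hp0 : 0 ≤ p) (hp1 : p < 1) (n : ℕ) :
    (∑ m ∈ Finset.range n, p ^ m) ≤ 1 / (1 - p) := by
  rw [geom_sum_eq (ne_of_lt hp1)]
  have h1 : 0 < 1 - p := by linarith
  have h2 : (p ^ n - 1) / (p - 1) = (1 - p ^ n) / (1 - p) := by
    rw [← neg_div_neg_eq]; ring_nf
  rw [h2]
  apply div_le_div_of_nonneg_right ?_ h1.le
  have : 0 ≤ p ^ n := pow_nonneg hp0 n
  linarith

lemma cov_bound' (hp0 : 0 < p) (hp1 : p < 1) {j k n : ℕ} (hj : j < n) (hk : k < n) :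
    |expVal p n (fun c => X j c * X k c) - ev p j * ev p k|
      ≤ p ^ (max j k - min j k) := by
  rcases le_total j k with h | h
  · rw [expVal_stable (show k + 1 ≤ n from hk) (depOn_mul
      (depOn_mono (Nat.succ_le_succ h) (depOn_X j)) (depOn_X k))]
    rw [max_eq_right h, min_eq_left h]
    exact cov_bound hp0 hp1 j k h
  · have : (fun c => X j c * X k c) = (fun c => X k c * X j c) := by
      funext c; ring
    rw [this, expVal_stable (show j + 1 ≤ n from hj) (depOn_mul
      (depOn_mono (Nat.succ_le_succ h) (depOn_X k)) (depOn_X j))]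
    rw [max_eq_left h, min_eq_right h]
    have := cov_bound hp0 hp1 k j h
    calc |expVal p (j+1) (fun c => X k c * X j c) - ev p j * ev p k|
        = |expVal p (j+1) (fun c => X k c * X j c) - ev p k * ev p j| := by rw [mul_comm]
      _ ≤ p ^ (j - k) := this

def Sf (T : Finset ℕ) (c : ℕ → Bool) : ℝ := ∑ k ∈ T, X k c
def ET (p : ℝ) (T : Finset ℕ) : ℝ := ∑ k ∈ T, ev p k

lemma expVal_sub_sq (n : ℕ) (T : Finset ℕ) (hT : T ⊆ Finset.range n) :
    expVal p n (fun c => (Sf T c - ET p T)^2)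
      = ∑ j ∈ T, ∑ k ∈ T,
          (expVal p n (fun c => X j c * X k c) - ev p j * ev p k) := by
  have hsq : ∀ c, (Sf T c - ET p T)^2
      = ∑ j ∈ T, ∑ k ∈ T, ((X j c - ev p j) * (X k c - ev p k)) := by
    intro c
    rw [Sf, ET, ← Finset.sum_sub_distrib, sq, Finset.sum_mul_sum]
  rw [expVal]
  simp only [hsq, Finset.mul_sum]
  rw [Finset.sum_comm]
  refine Finset.sum_congr rfl fun j hj => ?_
  rw [Finset.sum_comm]
  refine Finset.sum_congr rfl fun k hk => ?_
  have hej : expVal p n (X j) = ev p j := by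
    rw [expVal_stable (Finset.mem_range.mp (hT hj)) (depOn_X j), expVal_X]
  have hek : expVal p n (X k) = ev p k := by
    rw [expVal_stable (Finset.mem_range.mp (hT hk)) (depOn_X k), expVal_X]
  have hpt : ∀ c : Fin n → Bool,
      wt p c * ((X j (ext n c) - ev p j) * (X k (ext n c) - ev p k))
      = wt p c * (X j (ext n c) * X k (ext n c)) - ev p j * (wt p c * X k (ext n c))
        - ev p k * (wt p c * X j (ext n c)) + (ev p j * ev p k) * wt p c := by
    intro c; ring
  rw [Finset.sum_congr rfl (fun c _ => hpt c), Finset.sum_add_distrib,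
    Finset.sum_sub_distrib, Finset.sum_sub_distrib, ← Finset.mul_sum, ← Finset.mul_sum,
    ← Finset.mul_sum, sum_wt]
  have h1 : (∑ c : Fin n → Bool, wt p c * X k (ext n c)) = ev p k := hek
  have h2 : (∑ c : Fin n → Bool, wt p c * X j (ext n c)) = ev p j := hej
  have h3 : (∑ c : Fin n → Bool, wt p c * (X j (ext n c) * X k (ext n c)))
      = expVal p n (fun c => X j c * X k c) := rfl
  rw [h1, h2, h3]
  ring


lemma inner_geom_bound (hp0 : 0 < p) (hp1 : p < 1) (n j : ℕ) :
    (∑ k ∈ Finset.range n, p ^ (max j k - min j k)) ≤ 2 / (1 - p) := by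
  rw [← Finset.sum_filter_add_sum_filter_not (Finset.range n) (· ≤ j)]
  have h1 : (∑ k ∈ (Finset.range n).filter (· ≤ j), p ^ (max j k - min j k))
      ≤ 1 / (1 - p) := by
    have : ∀ k ∈ (Finset.range n).filter (· ≤ j),
        p ^ (max j k - min j k) = p ^ (j - k) := by
      intro k hk
      have hkj : k ≤ j := (Finset.mem_filter.mp hk).2
      rw [max_eq_left hkj, min_eq_right hkj]
    rw [Finset.sum_congr rfl this]
    have himg : (∑ k ∈ (Finset.range n).filter (· ≤ j), p ^ (j - k))
        = ∑ m ∈ ((Finset.range n).filter (· ≤ j)).image (j - ·), p ^ m := by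
      rw [Finset.sum_image]
      intro a ha b hb hab
      have : a ≤ j := (Finset.mem_filter.mp ha).2
      have : b ≤ j := (Finset.mem_filter.mp hb).2
      simp only at hab
      omega
    rw [himg]
    refine le_trans (Finset.sum_le_sum_of_subset_of_nonneg ?_
      (fun m _ _ => pow_nonneg hp0.le m)) (geom_le hp0.le hp1 (j+1))
    intro m hm
    obtain ⟨k, hk, rfl⟩ := Finset.mem_image.mp hm
    exact Finset.mem_range.mpr (by omega)
  have h2 : (∑ k ∈ (Finset.range n).filter (fun k => ¬ k ≤ j), p ^ (max j k - min j k))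
      ≤ 1 / (1 - p) := by
    have : ∀ k ∈ (Finset.range n).filter (fun k => ¬ k ≤ j),
        p ^ (max j k - min j k) = p ^ (k - j) := by
      intro k hk
      have hkj : j ≤ k := le_of_lt (not_le.mp (Finset.mem_filter.mp hk).2)
      rw [max_eq_right hkj, min_eq_left hkj]
    rw [Finset.sum_congr rfl this]
    have himg : (∑ k ∈ (Finset.range n).filter (fun k => ¬ k ≤ j), p ^ (k - j))
        = ∑ m ∈ ((Finset.range n).filter (fun k => ¬ k ≤ j)).image (· - j), p ^ m := by
      rw [Finset.sum_image]
      intro a ha b hb hab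
      have : ¬ a ≤ j := (Finset.mem_filter.mp ha).2
      have : ¬ b ≤ j := (Finset.mem_filter.mp hb).2
      simp only at hab
      omega
    rw [himg]
    refine le_trans (Finset.sum_le_sum_of_subset_of_nonneg ?_
      (fun m _ _ => pow_nonneg hp0.le m)) (geom_le hp0.le hp1 n)
    intro m hm
    obtain ⟨k, hk, rfl⟩ := Finset.mem_image.mp hm
    have := Finset.mem_range.mp (Finset.mem_filter.mp hk).1
    exact Finset.mem_range.mpr (by omega)
  have : (2 : ℝ) / (1 - p) = 1 / (1-p) + 1 / (1-p) := by ring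
  rw [this]
  exact add_le_add h1 h2

lemma var_bound (hp0 : 0 < p) (hp1 : p < 1) (n : ℕ) (T : Finset ℕ)
    (hT : T ⊆ Finset.range n) :
    expVal p n (fun c => (Sf T c - ET p T)^2) ≤ n * (2 / (1 - p)) := by
  rw [expVal_sub_sq n T hT]
  calc ∑ j ∈ T, ∑ k ∈ T, (expVal p n (fun c => X j c * X k c) - ev p j * ev p k)
      ≤ ∑ j ∈ T, ∑ k ∈ T, p ^ (max j k - min j k) := by
        refine Finset.sum_le_sum fun j hj => Finset.sum_le_sum fun k hk => ?_
        exact le_trans (le_abs_self _)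
          (cov_bound' hp0 hp1 (Finset.mem_range.mp (hT hj)) (Finset.mem_range.mp (hT hk)))
    _ ≤ ∑ j ∈ T, ∑ k ∈ Finset.range n, p ^ (max j k - min j k) := by
        refine Finset.sum_le_sum fun j _ => ?_
        exact Finset.sum_le_sum_of_subset_of_nonneg hT
          (fun k _ _ => pow_nonneg hp0.le _)
    _ ≤ ∑ j ∈ T, 2 / (1 - p) :=
        Finset.sum_le_sum fun j _ => inner_geom_bound hp0 hp1 n j
    _ = T.card * (2 / (1 - p)) := by rw [Finset.sum_const, nsmul_eq_mul]
    _ ≤ n * (2 / (1 - p)) := by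
        have hc : (T.card : ℝ) ≤ n := by
          exact_mod_cast le_trans (Finset.card_le_card hT) (by simp)
        have : 0 ≤ 2 / (1 - p) := by
          apply div_nonneg (by norm_num); linarith
        exact mul_le_mul_of_nonneg_right hc this

open MeasureTheory in
open Classical in
lemma measure_eq_finProb (hp0 : 0 < p) (hp1 : p < 1)
    (μ : Measure (ℕ → Bool))
    (hμ : ∀ (s : Finset ℕ) (f : ℕ → Bool),
      μ {c | ∀ i ∈ s, c i = f i}
        = ∏ i ∈ s, ENNReal.ofReal (if f i then p else 1 - p))
    (n : ℕ) (E : (ℕ → Bool) → Prop)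
    (hE : ∀ c c' : ℕ → Bool, (∀ i, i < n → c i = c' i) → (E c ↔ E c')) :
    μ {c | E c} = ENNReal.ofReal (finProb p n E) := by
  set A : Finset (Fin n → Bool) := Finset.univ.filter (fun c0 => E (ext n c0)) with hA
  have hset : {c : ℕ → Bool | E c} = ⋃ c0 ∈ A, {c | ∀ i ∈ Finset.range n, c i = ext n c0 i} := by
    ext c
    simp only [Set.mem_setOf_eq, Set.mem_iUnion]
    constructor
    · intro hc
      refine ⟨fun i => c i, ?_, ?_⟩
      · rw [hA, Finset.mem_filter]
        refine ⟨Finset.mem_univ _, ?_⟩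
        exact (hE c _ (fun i hi => by simp [_root_.ext, hi])).mp hc
      · intro i hi
        have hi' := Finset.mem_range.mp hi
        simp [_root_.ext, hi']
    · rintro ⟨c0, hc0, hcc⟩
      have hc0E : E (ext n c0) := (Finset.mem_filter.mp hc0).2
      exact (hE (ext n c0) c (fun i hi => (hcc i (Finset.mem_range.mpr hi)).symm)).mp hc0E
  have hdisj : Set.PairwiseDisjoint (↑A)
      (fun c0 : Fin n → Bool => {c : ℕ → Bool | ∀ i ∈ Finset.range n, c i = ext n c0 i}) := by
    intro c0 _ c1 _ hne
    refine Set.disjoint_left.mpr fun c hc hc' => hne ?_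
    funext i
    have h0 := hc i.val (Finset.mem_range.mpr i.isLt)
    have h1 := hc' i.val (Finset.mem_range.mpr i.isLt)
    have : ext n c0 i.val = ext n c1 i.val := by rw [← h0, h1]
    simpa [_root_.ext, i.isLt] using this
  have hmeas : ∀ c0 : Fin n → Bool,
      MeasurableSet {c : ℕ → Bool | ∀ i ∈ Finset.range n, c i = ext n c0 i} := by
    intro c0
    have : {c : ℕ → Bool | ∀ i ∈ Finset.range n, c i = ext n c0 i}
        = ⋂ i ∈ Finset.range n, (fun c : ℕ → Bool => c i) ⁻¹' {ext n c0 i} := by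
      ext c; simp [Set.mem_iInter]
    rw [this]
    exact Finset.measurableSet_biInter _ fun i _ =>
      (measurable_pi_apply i) (measurableSet_singleton _)
  have hcyl : ∀ c0 : Fin n → Bool,
      μ {c : ℕ → Bool | ∀ i ∈ Finset.range n, c i = ext n c0 i}
        = ENNReal.ofReal (wt p c0) := by
    intro c0
    rw [hμ (Finset.range n) (ext n c0)]
    have hnn : ∀ i ∈ Finset.range n, (0:ℝ) ≤ if ext n c0 i then p else 1 - p := by
      intro i _; split <;> linarith
    rw [← ENNReal.ofReal_prod_of_nonneg hnn]
    congr 1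
    rw [wt, ← Fin.prod_univ_eq_prod_range (fun i => if ext n c0 i then p else 1 - p) n]
    exact Finset.prod_congr rfl (fun i _ => by simp [_root_.ext, i.isLt])
  rw [hset, measure_biUnion_finset hdisj (fun c0 _ => hmeas c0)]
  rw [Finset.sum_congr rfl (fun c0 _ => hcyl c0)]
  rw [← ENNReal.ofReal_sum_of_nonneg (fun c0 _ => wt_nonneg hp0.le hp1.le c0)]
  congr 1
  rw [finProb, hA, Finset.sum_filter]

open Classical in
lemma cheb (hp0 : 0 < p) (hp1 : p < 1) (n : ℕ) (f : (ℕ → Bool) → ℝ) (a : ℝ) (ha : 0 < a) :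
    finProb p n (fun c => a ≤ |f c|) ≤ expVal p n (fun c => (f c)^2) / a^2 := by
  rw [finProb, expVal, Finset.sum_div]
  refine Finset.sum_le_sum fun c _ => ?_
  have hw := wt_nonneg hp0.le hp1.le c
  split
  · rename_i h
    have h2 : a^2 ≤ (f (ext n c))^2 := by
      have := sq_abs (f (ext n c))
      nlinarith [abs_nonneg (f (ext n c))]
    have h3 : wt p c * a^2 ≤ wt p c * (f (ext n c))^2 :=
      mul_le_mul_of_nonneg_left h2 hw
    rw [le_div_iff₀ (by positivity)]
    linarith
  · positivity

lemma card_Icc_filter_shift (Q : ℕ → Prop) {R : ℕ → Prop}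
    {dQ : DecidablePred Q} {dR : DecidablePred R} (hQR : ∀ k, Q (k+1) ↔ R k) (n : ℕ) :
    (@Finset.filter ℕ Q dQ (Finset.Icc 1 n)).card
      = (@Finset.filter ℕ R dR (Finset.range n)).card := by
  apply Finset.card_nbij (fun j => j - 1)
  · intro a ha
    rw [Finset.mem_coe, Finset.mem_filter, Finset.mem_Icc] at ha
    rw [Finset.mem_coe, Finset.mem_filter, Finset.mem_range]
    beta_reduce
    obtain ⟨⟨h1, h2⟩, hQ⟩ := ha
    refine ⟨by omega, ?_⟩
    rw [← hQR (a-1), show a - 1 + 1 = a by omega]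
    exact hQ
  · intro a ha b hb hab
    simp only [Finset.coe_filter, Set.mem_setOf_eq, Finset.mem_Icc] at ha hb
    simp only at hab
    omega
  · intro k hk
    simp only [Finset.coe_filter, Set.mem_setOf_eq, Finset.mem_range] at hk
    refine ⟨k + 1, ?_, by simp⟩
    simp only [Finset.coe_filter, Set.mem_setOf_eq, Finset.mem_Icc]
    exact ⟨⟨by omega, by omega⟩, (hQR k).mpr hk.2⟩

open Classical in
/-- count of included indices in `range n` lying in `T`. -/
def cnt (T : ℕ → Prop) (n : ℕ) (c : ℕ → Bool) : ℕ :=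
  ((Finset.range n).filter (fun k => T k ∧ included c k = true)).card

open Classical in
def TA (T : ℕ → Prop) (n : ℕ) : Finset ℕ := (Finset.range n).filter T

open Classical in
lemma cnt_real (T : ℕ → Prop) (n : ℕ) (c : ℕ → Bool) :
    ((cnt T n c : ℕ) : ℝ) = Sf (TA T n) c := by
  rw [cnt, TA, ← Finset.filter_filter, Finset.card_filter, Sf]
  rw [Nat.cast_sum]
  refine Finset.sum_congr rfl fun k _ => ?_
  by_cases h : included c k <;> simp [X, h]

open Classical in
lemma cnt_mono (T : ℕ → Prop) (c : ℕ → Bool) {n m : ℕ} (h : n ≤ m) :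
    cnt T n c ≤ cnt T m c := by
  apply Finset.card_le_card
  apply Finset.filter_subset_filter
  exact Finset.range_subset_range.mpr h

open Classical in
lemma cnt_le_add (T : ℕ → Prop) (c : ℕ → Bool) {n m : ℕ} (h : n ≤ m) :
    cnt T m c ≤ cnt T n c + (m - n) := by
  rw [cnt, cnt]
  have : Finset.range m = Finset.range n ∪ Finset.Ico n m := by
    rw [Finset.range_eq_Ico, ← Finset.Ico_union_Ico_eq_Ico (Nat.zero_le n) h,
      ← Finset.range_eq_Ico]
  rw [this, Finset.filter_union]
  calc (((Finset.range n).filter _) ∪ ((Finset.Ico n m).filter _)).card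
      ≤ _ + ((Finset.Ico n m).filter (fun k => T k ∧ included c k = true)).card :=
        Finset.card_union_le _ _
    _ ≤ _ + (m - n) := by
        gcongr
        calc ((Finset.Ico n m).filter _).card ≤ (Finset.Ico n m).card :=
              Finset.card_filter_le _ _
          _ = m - n := Nat.card_Ico n m

open Classical in
lemma ET_mono (hp0 : 0 ≤ p) (hp1 : p ≤ 1) (T : ℕ → Prop) {n m : ℕ} (h : n ≤ m) :
    ET p (TA T n) ≤ ET p (TA T m) := by
  apply Finset.sum_le_sum_of_subset_of_nonneg
  · exact Finset.filter_subset_filter _ (Finset.range_subset_range.mpr h)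
  · exact fun k _ _ => (ev_mem hp0 hp1 k).1

open Classical in
lemma ET_le_add (hp0 : 0 ≤ p) (hp1 : p ≤ 1) (T : ℕ → Prop) {n m : ℕ} (h : n ≤ m) :
    ET p (TA T m) ≤ ET p (TA T n) + ((m : ℝ) - n) := by
  rw [ET, ET, TA, TA]
  have hsplit : Finset.range m = Finset.range n ∪ Finset.Ico n m := by
    rw [Finset.range_eq_Ico, ← Finset.Ico_union_Ico_eq_Ico (Nat.zero_le n) h,
      ← Finset.range_eq_Ico]
  have hdisj : Disjoint (Finset.range n) (Finset.Ico n m) := by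
    rw [Finset.range_eq_Ico]
    exact Finset.Ico_disjoint_Ico_consecutive 0 n m
  rw [hsplit, Finset.filter_union, Finset.sum_union (Finset.disjoint_filter_filter hdisj)]
  gcongr
  calc (∑ k ∈ (Finset.Ico n m).filter T, ev p k)
      ≤ ∑ k ∈ (Finset.Ico n m).filter T, 1 :=
        Finset.sum_le_sum fun k _ => (ev_mem hp0 hp1 k).2
    _ = ((Finset.Ico n m).filter T).card := by rw [Finset.sum_const, nsmul_eq_mul, mul_one]
    _ ≤ (Finset.Ico n m).card := by exact_mod_cast Finset.card_filter_le _ _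
    _ = ((m : ℝ) - n) := by rw [Nat.card_Ico]; push_cast [h]; ring

def alpha (p : ℝ) : ℝ := p / (1 + p)

lemma alpha_fix (hp : 0 ≤ p) : p * (1 - alpha p) = alpha p := by
  rw [alpha]
  have : (1:ℝ) + p ≠ 0 := by linarith
  field_simp
  ring

lemma ev_close (hp0 : 0 ≤ p) (hp1 : p ≤ 1) : ∀ k, |ev p k - alpha p| ≤ p ^ k
  | 0 => by
    rw [ev, pow_zero, alpha]
    have h1 : (0:ℝ) < 1 + p := by linarith
    rw [abs_le]
    constructor
    · rw [neg_le, ← sub_nonneg]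
      have : p - p / (1+p) = p * p / (1+p) := by field_simp; ring
      rw [show (1:ℝ) - -(p - p/(1+p)) = 1 + (p - p/(1+p)) by ring] at *
      have h2 : 0 ≤ p * p / (1+p) := by positivity
      linarith [this ▸ h2]
    · have : p - p / (1+p) = p * p / (1+p) := by field_simp; ring
      rw [this]
      rw [div_le_one h1]
      nlinarith
  | k + 1 => by
    have ih := ev_close hp0 hp1 k
    have : ev p (k+1) - alpha p = -p * (ev p k - alpha p) := by
      rw [ev]
      linear_combination alpha_fix hp0
    rw [this, abs_mul, abs_neg, abs_of_nonneg hp0, pow_succ, mul_comm (p^k) p]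
    exact mul_le_mul_of_nonneg_left ih hp0

open Classical in
lemma ET_close (hp0 : 0 ≤ p) (hp1 : p < 1) (T : ℕ → Prop) (n : ℕ) :
    |ET p (TA T n) - alpha p * ((TA T n).card : ℝ)| ≤ 1 / (1 - p) := by
  rw [ET]
  have h1 : (ET p (TA T n) : ℝ) - alpha p * ((TA T n).card : ℝ)
      = ∑ k ∈ TA T n, (ev p k - alpha p) := by
    rw [ET, Finset.sum_sub_distrib, Finset.sum_const, nsmul_eq_mul]
    ring
  rw [ET] at h1
  rw [h1]
  calc |∑ k ∈ TA T n, (ev p k - alpha p)| ≤ ∑ k ∈ TA T n, |ev p k - alpha p| :=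
        Finset.abs_sum_le_sum_abs _ _
    _ ≤ ∑ k ∈ TA T n, p ^ k := Finset.sum_le_sum fun k _ => ev_close hp0 hp1.le k
    _ ≤ ∑ k ∈ Finset.range n, p ^ k := by
        apply Finset.sum_le_sum_of_subset_of_nonneg (Finset.filter_subset _ _)
        exact fun k _ _ => pow_nonneg hp0 k
    _ ≤ 1 / (1 - p) := geom_le hp0 hp1 n

open Classical in
lemma ET_div_tendsto (hp0 : 0 ≤ p) (hp1 : p < 1) (T : ℕ → Prop) (δ : ℝ)
    (hδ : Filter.Tendsto (fun n : ℕ => (((TA T n).card : ℝ)) / n) Filter.atTop (nhds δ)) :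
    Filter.Tendsto (fun n : ℕ => ET p (TA T n) / n) Filter.atTop (nhds (alpha p * δ)) := by
  have h0 : Filter.Tendsto
      (fun n : ℕ => ET p (TA T n) / n - alpha p * (((TA T n).card : ℝ)) / n)
      Filter.atTop (nhds 0) := by
    apply squeeze_zero_norm (a := fun n : ℕ => (1/(1-p)) / n)
    · intro n
      rcases Nat.eq_zero_or_pos n with rfl | hn
      · simp
      · have : ET p (TA T n) / n - alpha p * (((TA T n).card : ℝ)) / n
            = (ET p (TA T n) - alpha p * ((TA T n).card : ℝ)) / n := by ring
        rw [this, norm_div, Real.norm_natCast]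
        exact div_le_div_of_nonneg_right (ET_close hp0 hp1 T n) (Nat.cast_nonneg n)
    · exact tendsto_const_div_atTop_nhds_zero_nat _
  have h1 : Filter.Tendsto (fun n : ℕ => alpha p * ((((TA T n).card : ℝ)) / n))
      Filter.atTop (nhds (alpha p * δ)) := hδ.const_mul _
  have := h0.add h1
  rw [zero_add] at this
  apply this.congr
  intro n
  ring

open Classical in
lemma depOn_Sf {T' : Finset ℕ} {n : ℕ} (hT : T' ⊆ Finset.range n) : depOn n (Sf T') := by
  intro c c' h
  refine Finset.sum_congr rfl fun k hk => ?_
  exact depOn_X k c c' fun i hi =>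
    h i (lt_of_lt_of_le hi (Finset.mem_range.mp (hT hk)))

open MeasureTheory in
open Classical in
lemma measure_bad_le (hp0 : 0 < p) (hp1 : p < 1)
    (μ : Measure (ℕ → Bool))
    (hμ : ∀ (s : Finset ℕ) (f : ℕ → Bool),
      μ {c | ∀ i ∈ s, c i = f i}
        = ∏ i ∈ s, ENNReal.ofReal (if f i then p else 1 - p))
    (T : ℕ → Prop) (n : ℕ) (a : ℝ) (ha : 0 < a) :
    μ {c | a ≤ |Sf (TA T n) c - ET p (TA T n)|}
      ≤ ENNReal.ofReal ((n * (2/(1-p))) / a^2) := by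
  have hdep : depOn n (Sf (TA T n)) := depOn_Sf (Finset.filter_subset _ _)
  have hE : ∀ c c' : ℕ → Bool, (∀ i, i < n → c i = c' i) →
      ((a ≤ |Sf (TA T n) c - ET p (TA T n)|) ↔ (a ≤ |Sf (TA T n) c' - ET p (TA T n)|)) := by
    intro c c' h
    rw [hdep c c' h]
  rw [measure_eq_finProb hp0 hp1 μ hμ n _ hE]
  apply ENNReal.ofReal_le_ofReal
  calc finProb p n (fun c => a ≤ |Sf (TA T n) c - ET p (TA T n)|)
      ≤ expVal p n (fun c => (Sf (TA T n) c - ET p (TA T n))^2) / a^2 :=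
        cheb hp0 hp1 n _ a ha
    _ ≤ (n * (2/(1-p))) / a^2 := by
        apply div_le_div_of_nonneg_right ?_ (by positivity)
        exact var_bound hp0 hp1 n _ (Finset.filter_subset _ _)

open MeasureTheory in
open Classical in
/-- the bad events along squares -/
def Bad (p : ℝ) (T : ℕ → Prop) (r s : ℕ) : Set (ℕ → Bool) :=
  {c | ((((s+1)^2 : ℕ) : ℝ))/(r+1) ≤ |Sf (TA T ((s+1)^2)) c - ET p (TA T ((s+1)^2))|}

open MeasureTheory in
open Classical in
lemma measure_limsup_bad (hp0 : 0 < p) (hp1 : p < 1)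
    (μ : Measure (ℕ → Bool))
    (hμ : ∀ (s : Finset ℕ) (f : ℕ → Bool),
      μ {c | ∀ i ∈ s, c i = f i}
        = ∏ i ∈ s, ENNReal.ofReal (if f i then p else 1 - p))
    (T : ℕ → Prop) (r : ℕ) :
    μ (Filter.atTop.limsup (Bad p T r)) = 0 := by
  set K : ℝ := (2/(1-p)) * ((r:ℝ)+1)^2 with hK
  have hbound : ∀ s : ℕ, μ (Bad p T r s) ≤ ENNReal.ofReal (K / ((s:ℝ)+1)^2) := by
    intro s
    have hn : (0:ℝ) < (((s+1)^2 : ℕ) : ℝ) := by positivity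
    have ha : (0:ℝ) < (((s+1)^2 : ℕ) : ℝ)/(r+1) := by positivity
    refine le_trans (measure_bad_le hp0 hp1 μ hμ T ((s+1)^2) _ ha) ?_
    apply ENNReal.ofReal_le_ofReal
    have heq : ((((s+1)^2 : ℕ):ℝ) * (2/(1-p))) / ((((s+1)^2 : ℕ):ℝ)/(r+1))^2
        = K / (((s+1)^2 : ℕ):ℝ) := by
      have hb : ((r:ℝ)+1) ≠ 0 := by positivity
      have hnn : (((s+1)^2 : ℕ):ℝ) ≠ 0 := ne_of_gt hn
      have h1p : (1:ℝ) - p ≠ 0 := by linarith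
      rw [hK]
      field_simp
    rw [heq]
    have : (((s+1)^2 : ℕ):ℝ) = ((s:ℝ)+1)^2 := by push_cast; ring
    rw [this]
  apply measure_limsup_atTop_eq_zero
  have hsum : Summable (fun s : ℕ => K / ((s:ℝ)+1)^2) := by
    have h1 : Summable (fun s : ℕ => 1 / ((s:ℝ)+1)^2) := by
      have := (summable_nat_add_iff 1).mpr
        ((Real.summable_one_div_nat_pow (p := 2)).mpr one_lt_two)
      simpa using this
    simpa [div_eq_mul_inv] using h1.mul_left K
  have hKnn : ∀ s : ℕ, 0 ≤ K / ((s:ℝ)+1)^2 := by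
    intro s
    have : (0:ℝ) ≤ K := by
      rw [hK]
      have : (0:ℝ) ≤ 2/(1-p) := div_nonneg (by norm_num) (by linarith)
      positivity
    positivity
  apply ne_top_of_le_ne_top (b := ENNReal.ofReal (∑' s : ℕ, K / ((s:ℝ)+1)^2))
    ENNReal.ofReal_ne_top
  calc (∑' s, μ (Bad p T r s)) ≤ ∑' s : ℕ, ENNReal.ofReal (K / ((s:ℝ)+1)^2) :=
        ENNReal.tsum_le_tsum hbound
    _ = ENNReal.ofReal (∑' s : ℕ, K / ((s:ℝ)+1)^2) :=
        (ENNReal.ofReal_tsum_of_nonneg hKnn hsum).symm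

lemma det_main (u A : ℕ → ℝ) (β : ℝ)
    (hu : ∀ n m : ℕ, n ≤ m → u n ≤ u m ∧ u m ≤ u n + ((m:ℝ) - n))
    (hA : ∀ n m : ℕ, n ≤ m → A n ≤ A m ∧ A m ≤ A n + ((m:ℝ) - n))
    (h2 : ∀ r : ℕ, ∀ᶠ s : ℕ in Filter.atTop,
      |u ((s+1)^2) - A ((s+1)^2)| ≤ ((((s+1)^2 : ℕ)) : ℝ)/(r+1))
    (h3 : Filter.Tendsto (fun n : ℕ => A n / n) Filter.atTop (nhds β)) :
    Filter.Tendsto (fun n : ℕ => u n / n) Filter.atTop (nhds β) := by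
  have key : Filter.Tendsto (fun n : ℕ => (u n - A n) / n) Filter.atTop (nhds 0) := by
    rw [Metric.tendsto_atTop]
    intro ε hε
    obtain ⟨r, hr⟩ := exists_nat_one_div_lt (show (0:ℝ) < ε/4 by linarith)
    obtain ⟨s0, hs0⟩ := (Filter.eventually_atTop).mp (h2 r)
    obtain ⟨T0, hT0⟩ := exists_nat_gt (4/ε)
    set N := max ((s0+1)^2) ((T0+1)^2) with hN
    refine ⟨N, fun n hn => ?_⟩
    set t := Nat.sqrt n with ht
    have htsq : t ^ 2 ≤ n := Nat.sqrt_le' n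
    have htsq' : n < (t+1) ^ 2 := Nat.lt_succ_sqrt' n
    have ht1 : s0 + 1 ≤ t := by
      have : (s0+1)^2 ≤ n := le_trans (le_max_left _ _) hn
      have := Nat.sqrt_le_sqrt this
      rwa [Nat.sqrt_eq' (s0+1)] at this
    have ht2 : T0 + 1 ≤ t := by
      have : (T0+1)^2 ≤ n := le_trans (le_max_right _ _) hn
      have := Nat.sqrt_le_sqrt this
      rwa [Nat.sqrt_eq' (T0+1)] at this
    have htpos : 1 ≤ t := le_trans (by omega) ht1
    -- bound |u n - A n|
    have hsqbound : |u (t^2) - A (t^2)| ≤ ((t^2 : ℕ) : ℝ)/(r+1) := by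
      have := hs0 (t - 1) (by omega)
      have htt : t - 1 + 1 = t := by omega
      rwa [htt] at this
    have htn : t^2 ≤ n := htsq
    have hu' := hu (t^2) n htn
    have hA' := hA (t^2) n htn
    have hgap : ((n:ℝ) - ((t^2 : ℕ):ℝ)) ≤ 2 * t := by
      have hh : n ≤ t^2 + 2*t := by
        have : (t+1)^2 = t^2 + 2*t + 1 := by ring
        omega
      have : (n:ℝ) ≤ ((t^2 + 2*t : ℕ) : ℝ) := by exact_mod_cast hh
      push_cast at this ⊢
      linarith
    have hbound : |u n - A n| ≤ ((t^2:ℕ):ℝ)/(r+1) + 2*t := by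
      rw [abs_le] at hsqbound ⊢
      obtain ⟨hu1, hu2⟩ := hu'
      obtain ⟨hA1, hA2⟩ := hA'
      constructor
      · linarith [hsqbound.1]
      · linarith [hsqbound.2]
    -- conclude
    have hnpos : (0:ℝ) < n := by
      have : 1 ≤ n := le_trans (Nat.one_le_iff_ne_zero.mpr (by positivity)) hn
      exact_mod_cast this
    rw [Real.dist_eq, sub_zero, abs_div, abs_of_pos hnpos, div_lt_iff₀ hnpos]
    have h1 : ((t^2:ℕ):ℝ)/(r+1) ≤ (ε/4) * n := by
      have hle : ((t^2:ℕ):ℝ) ≤ n := by exact_mod_cast htn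
      have hrpos : (0:ℝ) < r+1 := by positivity
      calc ((t^2:ℕ):ℝ)/(r+1) ≤ (n:ℝ)/(r+1) :=
            div_le_div_of_nonneg_right hle hrpos.le
        _ = (1/((r:ℝ)+1)) * n := by ring
        _ ≤ (ε/4) * n := by
            apply mul_le_mul_of_nonneg_right (le_of_lt hr) hnpos.le
    have h2' : (2:ℝ) * t ≤ (ε/2) * n := by
      have htR : (0:ℝ) < t := by exact_mod_cast htpos
      have h4 : (4:ℝ)/ε < t := by
        have : (T0:ℝ) < t := by exact_mod_cast by omega
        have hT0' : (4:ℝ)/ε < T0 := by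
          calc (4:ℝ)/ε = 4/ε := rfl
            _ < T0 := by linarith [hT0]
        linarith
      have ht2n : ((t:ℝ)) * t ≤ n := by
        have : t * t ≤ n := by nlinarith [htsq]
        exact_mod_cast this
      rw [div_lt_iff₀ hε] at h4
      have hstep : (2:ℝ)*t ≤ (ε/2)*((t:ℝ)*t) := by nlinarith
      calc (2:ℝ)*t ≤ (ε/2)*((t:ℝ)*t) := hstep
        _ ≤ (ε/2) * n := by
            apply mul_le_mul_of_nonneg_left ht2n (by linarith)
    calc |u n - A n| ≤ ((t^2:ℕ):ℝ)/(r+1) + 2*t := hbound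
      _ ≤ (ε/4) * n + (ε/2) * n := add_le_add h1 h2'
      _ < ε * n := by nlinarith
  have := key.add h3
  rw [zero_add] at this
  apply this.congr
  intro n
  ring

lemma div_div_cancel_aux (a b n : ℝ) (hn : n ≠ 0) : (a/n)/(b/n) = a/b := by
  rcases eq_or_ne b 0 with rfl | hb
  · simp
  · field_simp

end RZ

open RZ in
open MeasureTheory in
open Classical in
/-- **Density Theorem for Random Decompositions.** Let `S` be a subset of the Fibonacci
numbers with asymptotic density `q(S)`. Then with probability `1` (with respect to the law
`μ` of the i.i.d. coin flips driving the random Zeckendorf process),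
`#(A_n(p) ∩ S)/#A_n(p) → q(S)` as `n → ∞`. -/
theorem density_theorem_random_decompositions
    (p : ℝ) (hp0 : 0 < p) (hp1 : p < 1)
    (μ : Measure (ℕ → Bool)) [IsProbabilityMeasure μ]
    (hμ : ∀ (s : Finset ℕ) (f : ℕ → Bool),
      μ {c | ∀ i ∈ s, c i = f i}
        = ∏ i ∈ s, ENNReal.ofReal (if f i then p else 1 - p))
    (S : Set ℕ) (q : ℝ)
    (hq : Filter.Tendsto
      (fun n : ℕ => (((Finset.Icc 1 n).filter (fun i => Fib i ∈ S)).card : ℝ) / n)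
      Filter.atTop (nhds q)) :
    μ {c | Filter.Tendsto
        (fun n : ℕ =>
          ((((Finset.Icc 1 n).filter
              (fun j => Fib j ∈ S ∧ included c (j - 1) = true)).card : ℝ))
            / ((countIn n c : ℝ)))
        Filter.atTop (nhds q)} = 1 := by

  have hαpos : 0 < alpha p := by
    rw [alpha]
    positivity
  set TS : ℕ → Prop := fun k => Fib (k+1) ∈ S with hTS
  set TF : ℕ → Prop := fun _ => True with hTF
  -- density of index sets
  have hδS : Filter.Tendsto (fun n : ℕ => (((TA TS n).card : ℝ)) / n)
      Filter.atTop (nhds q) := by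
    apply hq.congr
    intro n
    congr 2
    exact card_Icc_filter_shift (fun i => Fib i ∈ S) (fun k => Iff.rfl) n
  have hδF : Filter.Tendsto (fun n : ℕ => (((TA TF n).card : ℝ)) / n)
      Filter.atTop (nhds 1) := by
    have hcard : ∀ n : ℕ, (TA TF n).card = n := by
      intro n
      rw [TA, hTF, Finset.filter_true, Finset.card_range]
    apply Filter.Tendsto.congr' ?_ (tendsto_const_nhds (x := (1:ℝ)))
    filter_upwards [Filter.eventually_ge_atTop 1] with n hn
    rw [hcard n, div_self (by exact_mod_cast Nat.one_le_iff_ne_zero.mp hn)]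
  have hβS := ET_div_tendsto hp0.le hp1 TS q hδS
  have hβF := ET_div_tendsto hp0.le hp1 TF 1 hδF
  -- the null set
  set N : Set (ℕ → Bool) := (⋃ r : ℕ, Filter.atTop.limsup (Bad p TS r))
      ∪ (⋃ r : ℕ, Filter.atTop.limsup (Bad p TF r)) with hN
  have hNnull : μ N = 0 := by
    rw [hN]
    apply measure_union_null <;>
      exact measure_iUnion_null fun r => measure_limsup_bad hp0 hp1 μ hμ _ r
  -- good behavior off N
  have hgood : ∀ c : ℕ → Bool, c ∉ N → Filter.Tendsto
      (fun n : ℕ =>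
        ((((Finset.Icc 1 n).filter
            (fun j => Fib j ∈ S ∧ included c (j - 1) = true)).card : ℝ))
          / ((countIn n c : ℝ)))
      Filter.atTop (nhds q) := by
    intro c hc
    rw [hN, Set.mem_union, not_or] at hc
    obtain ⟨hcS, hcF⟩ := hc
    rw [Set.mem_iUnion, not_exists] at hcS hcF
    have hev : ∀ (T : ℕ → Prop), (∀ r : ℕ, c ∉ Filter.atTop.limsup (Bad p T r)) →
        ∀ r : ℕ, ∀ᶠ s : ℕ in Filter.atTop,
          |((cnt T ((s+1)^2) c : ℕ) : ℝ) - ET p (TA T ((s+1)^2))|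
            ≤ ((((s+1)^2 : ℕ)) : ℝ)/(r+1) := by
      intro T hT r
      have := hT r
      rw [Filter.mem_limsup_iff_frequently_mem, Filter.not_frequently] at this
      filter_upwards [this] with s hs
      rw [Bad, Set.mem_setOf_eq, not_le] at hs
      rw [cnt_real]
      exact le_of_lt hs
    have hmono : ∀ (T : ℕ → Prop) (n m : ℕ), n ≤ m →
        ((cnt T n c : ℕ) : ℝ) ≤ ((cnt T m c : ℕ) : ℝ) ∧
        ((cnt T m c : ℕ) : ℝ) ≤ ((cnt T n c : ℕ) : ℝ) + ((m:ℝ) - n) := by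
      intro T n m h
      constructor
      · exact_mod_cast cnt_mono T c h
      · have h1 : (cnt T m c : ℕ) ≤ (cnt T n c : ℕ) + (m - n) := cnt_le_add T c h
        have h2 : ((cnt T m c : ℕ) : ℝ) ≤ ((cnt T n c : ℕ) : ℝ) + ((m - n : ℕ) : ℝ) := by
          exact_mod_cast h1
        have h3 : ((m - n : ℕ) : ℝ) = (m:ℝ) - n := by
          rw [Nat.cast_sub h]
        rwa [h3] at h2
    have hAmono : ∀ (T : ℕ → Prop) (n m : ℕ), n ≤ m →
        ET p (TA T n) ≤ ET p (TA T m) ∧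
        ET p (TA T m) ≤ ET p (TA T n) + ((m:ℝ) - n) :=
      fun T n m h => ⟨ET_mono hp0.le hp1.le T h, ET_le_add hp0.le hp1.le T h⟩
    have huS : Filter.Tendsto (fun n : ℕ => ((cnt TS n c : ℕ) : ℝ) / n)
        Filter.atTop (nhds (alpha p * q)) :=
      det_main _ _ _ (hmono TS) (hAmono TS) (hev TS hcS) hβS
    have huF : Filter.Tendsto (fun n : ℕ => ((cnt TF n c : ℕ) : ℝ) / n)
        Filter.atTop (nhds (alpha p * 1)) :=
      det_main _ _ _ (hmono TF) (hAmono TF) (hev TF hcF) hβF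
    have hdiv := huS.div huF (by
      rw [mul_one]
      exact ne_of_gt hαpos)
    have hlim : (alpha p * q) / (alpha p * 1) = q := by
      rw [mul_div_mul_left q 1 (ne_of_gt hαpos), div_one]
    rw [hlim] at hdiv
    have hnum : ∀ n : ℕ, ((Finset.Icc 1 n).filter
        (fun j => Fib j ∈ S ∧ included c (j - 1) = true)).card = cnt TS n c := by
      intro n
      rw [cnt]
      exact card_Icc_filter_shift (fun j => Fib j ∈ S ∧ included c (j - 1) = true)
        (fun k => by rw [hTS]; simp) n
    have hden : ∀ n : ℕ, countIn n c = cnt TF n c := by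
      intro n
      rw [countIn, cnt]
      exact card_Icc_filter_shift (fun j => included c (j - 1) = true)
        (fun k => by rw [hTF]; simp) n
    apply hdiv.congr'
    filter_upwards [Filter.eventually_ge_atTop 1] with n hn
    have hnne : (n:ℝ) ≠ 0 := by exact_mod_cast Nat.one_le_iff_ne_zero.mp hn
    show (((cnt TS n c : ℕ):ℝ) / n) / (((cnt TF n c : ℕ):ℝ) / n) = _
    rw [div_div_cancel_aux _ _ _ hnne, hnum n, hden n]
  -- conclude
  set G : Set (ℕ → Bool) := {c | Filter.Tendsto
      (fun n : ℕ =>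
        ((((Finset.Icc 1 n).filter
            (fun j => Fib j ∈ S ∧ included c (j - 1) = true)).card : ℝ))
          / ((countIn n c : ℝ)))
      Filter.atTop (nhds q)} with hG
  have hsub : Gᶜ ⊆ N := by
    intro c hcG
    by_contra hcN
    exact hcG (hgood c hcN)
  have h0 : μ Gᶜ = 0 := measure_mono_null hsub hNnull
  refine le_antisymm prob_le_one ?_
  have hle := measure_union_le (μ := μ) G Gᶜ
  rw [Set.union_compl_self, measure_univ, h0, add_zero] at hle
  exact hle


end
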